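/- Converse to the substate theorem: Let ρ and σ be quantum states on ℂ^n and let k ≥ 0 be a real number. Suppose that for every real r ≥ 1 there exists a quantum state ρ' on ℂ^n such that ‖ρ − ρ'‖₁ ≤ 2/r and σ − ((r−1)/(r·2^{r·k}))·ρ' is positive semidefinite. Then for every POVM element F on ℂ^n with Tr(Fσ) ≠ 0, Tr(Fρ) · logb 2 (Tr(Fρ)/Tr(Fσ)) ≤ 2k + 2; that is, D(ρ‖σ) ≤ 2k + 2. -/

import Mathlib

open Matrix BigOperators
open scoped ComplexOrder

noncomputable section

/-- A quantum state: positive semidefinite matrix with unit trace. -/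
def IsState {d : Type*} [Fintype d] (ρ : Matrix d d ℂ) : Prop :=
  ρ.PosSemidef ∧ ρ.trace = 1

/-- `SuppLE ρ σ` : the support of `ρ` is contained in the support of `σ`,
expressed as inclusion of kernels the other way. -/
def SuppLE {d : Type*} [Fintype d] (ρ σ : Matrix d d ℂ) : Prop :=
  ∀ v : d → ℂ, σ *ᵥ v = 0 → ρ *ᵥ v = 0

/-- Matrix logarithm: apply `Real.log` to the eigenvalues (with `log 0 = 0`). -/
noncomputable def matLog {d : Type*} [Fintype d] [DecidableEq d]
    (ρ : Matrix d d ℂ) : Matrix d d ℂ :=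
  if h : ρ.IsHermitian then
    (h.eigenvectorUnitary : Matrix d d ℂ) *
      Matrix.diagonal (fun i => (Real.log (h.eigenvalues i) : ℂ)) *
      (star (h.eigenvectorUnitary : Matrix d d ℂ))
  else 0

/-- Quantum relative entropy `S(ρ‖σ) = Re Tr (ρ (log ρ - log σ))`. -/
noncomputable def relEnt {d : Type*} [Fintype d] [DecidableEq d]
    (ρ σ : Matrix d d ℂ) : ℝ :=
  (Matrix.trace (ρ * (matLog ρ - matLog σ))).re

/-- Trace norm of a Hermitian matrix: sum of absolute values of eigenvalues. -/
noncomputable def traceNorm {d : Type*} [Fintype d] [DecidableEq d]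
    (A : Matrix d d ℂ) : ℝ :=
  if h : A.IsHermitian then ∑ i, |h.eigenvalues i| else 0

/-- Rank-one operator `|ψ⟩⟨ψ|`. -/
def ketbra {d : Type*} (ψ : d → ℂ) : Matrix d d ℂ :=
  Matrix.of fun a b => ψ a * (starRingEnd ℂ) (ψ b)

/-- A POVM element: a positive semidefinite matrix `F` with `1 - F` positive semidefinite. -/
def IsPOVMElem {d : Type*} [Fintype d] [DecidableEq d] (F : Matrix d d ℂ) : Prop :=
  F.PosSemidef ∧ ((1 : Matrix d d ℂ) - F).PosSemidef

/-- `trR F ρ = Re Tr (F ρ)`. -/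
noncomputable def trR {d : Type*} [Fintype d] (F ρ : Matrix d d ℂ) : ℝ :=
  (Matrix.trace (F * ρ)).re

/-- Observational divergence `D(ρ‖σ)`. -/
noncomputable def obsDiv {d : Type*} [Fintype d] [DecidableEq d]
    (ρ σ : Matrix d d ℂ) : ℝ :=
  sSup {x : ℝ | ∃ F : Matrix d d ℂ, IsPOVMElem F ∧ trR F σ ≠ 0 ∧
    x = trR F ρ * Real.logb 2 (trR F ρ / trR F σ)}

/-- A probability distribution on `Fin n`. -/
def IsProbDist {n : ℕ} (P : Fin n → ℝ) : Prop :=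
  (∀ i, 0 ≤ P i) ∧ ∑ i, P i = 1

/-- Classical relative entropy (base 2); terms with `P i = 0` contribute `0`. -/
noncomputable def cRelEnt {n : ℕ} (P Q : Fin n → ℝ) : ℝ :=
  ∑ i, P i * Real.logb 2 (P i / Q i)

/-- Classical observational divergence. -/
noncomputable def cObsDiv {n : ℕ} (P Q : Fin n → ℝ) : ℝ :=
  sSup {x : ℝ | ∃ f : Fin n → ℝ, (∀ i, 0 ≤ f i ∧ f i ≤ 1) ∧
    (∑ i, f i * Q i) ≠ 0 ∧
    x = (∑ i, f i * P i) * Real.logb 2 ((∑ i, f i * P i) / (∑ i, f i * Q i))}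



-- ===== Auxiliary lemmas =====

lemma psd_diag_re_nonneg {d : Type*} [Fintype d] [DecidableEq d]
    {M : Matrix d d ℂ} (hM : M.PosSemidef) (i : d) : 0 ≤ (M i i).re := by
  have := hM.re_dotProduct_nonneg (Pi.single i 1)
  simpa [dotProduct, Matrix.mulVec, Pi.single_apply, Finset.mul_sum] using this

lemma psd_trace_re_nonneg {d : Type*} [Fintype d] [DecidableEq d]
    {M : Matrix d d ℂ} (hM : M.PosSemidef) : 0 ≤ M.trace.re := by
  rw [Matrix.trace]
  simp only [Complex.re_sum, Matrix.diag]
  exact Finset.sum_nonneg fun i _ => psd_diag_re_nonneg hM i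

lemma trace_mul_re_nonneg {d : Type*} [Fintype d] [DecidableEq d]
    {A B : Matrix d d ℂ} (hA : A.PosSemidef) (hB : B.PosSemidef) :
    0 ≤ trR A B := by
  unfold trR
  obtain ⟨S, hS, rfl⟩ : ∃ S, S.IsHermitian ∧ S * S = A :=
    by
      open scoped MatrixOrder in
      exact ⟨CFC.sqrt A, (Matrix.nonneg_iff_posSemidef.mp (CFC.sqrt_nonneg A)).isHermitian,
        CFC.sqrt_mul_sqrt_self A (Matrix.nonneg_iff_posSemidef.mpr hA)⟩
  have h1 : Matrix.trace (S * S * B) = Matrix.trace (S * B * S) :=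
    (Matrix.trace_mul_cycle S B S).symm
  rw [h1]
  have h2 : S * B * S = Sᴴ * B * S := by rw [hS]
  rw [h2]
  exact psd_trace_re_nonneg (hB.conjTranspose_mul_mul_same S)

lemma trR_sub {d : Type*} [Fintype d] (F A B : Matrix d d ℂ) :
    trR F (A - B) = trR F A - trR F B := by
  unfold trR
  rw [Matrix.mul_sub, Matrix.trace_sub]
  simp

lemma trR_smul {d : Type*} [Fintype d] (F A : Matrix d d ℂ) (c : ℝ) :
    trR F ((c : ℂ) • A) = c * trR F A := by
  unfold trR
  rw [Matrix.mul_smul, Matrix.trace_smul]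
  simp [Complex.real_smul]

lemma trR_le_half_traceNorm {d : Type*} [Fintype d] [DecidableEq d]
    (F A : Matrix d d ℂ) (hF : IsPOVMElem F) (hA : A.IsHermitian) (htr : A.trace = 0) :
    trR F A ≤ traceNorm A / 2 := by
  rw [traceNorm, dif_pos hA]
  unfold trR
  set U : Matrix d d ℂ := ↑(hA.eigenvectorUnitary) with hUdef
  have hU2 : star U * U = 1 := Matrix.UnitaryGroup.star_mul_self hA.eigenvectorUnitary
  set v : d → ℝ := hA.eigenvalues with hv
  set G : Matrix d d ℂ := star U * F * U with hG
  have hGpsd : G.PosSemidef := by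
    simpa [hG, Matrix.star_eq_conjTranspose] using hF.1.conjTranspose_mul_mul_same U
  have hG1psd : ((1 : Matrix d d ℂ) - G).PosSemidef := by
    have h0 : (1 : Matrix d d ℂ) - G = star U * ((1 : Matrix d d ℂ) - F) * U := by
      rw [Matrix.mul_sub, Matrix.mul_one, Matrix.sub_mul, hU2]
    rw [h0]
    simpa [Matrix.star_eq_conjTranspose] using hF.2.conjTranspose_mul_mul_same U
  have hAeq := hA.spectral_theorem
  have htrace : Matrix.trace (F * A)
      = Matrix.trace (G * Matrix.diagonal (RCLike.ofReal ∘ v)) := by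
    calc Matrix.trace (F * A)
        = Matrix.trace ((F * U * Matrix.diagonal (RCLike.ofReal ∘ v)) * star U) := by
          conv_lhs => rw [hAeq]
          simp [Matrix.mul_assoc]
          rfl
      _ = Matrix.trace (star U * (F * U * Matrix.diagonal (RCLike.ofReal ∘ v))) :=
          Matrix.trace_mul_comm _ _
      _ = Matrix.trace (G * Matrix.diagonal (RCLike.ofReal ∘ v)) := by
          rw [hG]; simp [Matrix.mul_assoc]
  have hsum0 : ∑ i, v i = 0 := by
    have h1 : Matrix.trace A = ∑ i, (v i : ℂ) := by
      conv_lhs => rw [hAeq, Unitary.conjStarAlgAut_apply]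
      rw [Matrix.trace_mul_comm, ← Matrix.mul_assoc, hU2, one_mul, Matrix.trace_diagonal]
      rfl
    have h2 := congrArg Complex.re (h1.symm.trans htr)
    simpa [Complex.re_sum] using h2
  rw [htrace, Matrix.trace]
  have hentry : ∀ i, ((G * Matrix.diagonal (RCLike.ofReal ∘ v)).diag i).re
      = (G i i).re * v i := by
    intro i
    simp [Matrix.diag, Matrix.mul_diagonal, Complex.mul_re, RCLike.ofReal]
  rw [Complex.re_sum]
  calc ∑ i, ((G * Matrix.diagonal (RCLike.ofReal ∘ v)).diag i).re
      = ∑ i, (G i i).re * v i := by simp [hentry]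
    _ ≤ ∑ i, (|v i| + v i) / 2 := by
        apply Finset.sum_le_sum
        intro i _
        have h0 := psd_diag_re_nonneg hGpsd i
        have h1 : (G i i).re ≤ 1 := by
          have := psd_diag_re_nonneg hG1psd i
          simp [Matrix.sub_apply, Matrix.one_apply_eq] at this
          linarith
        rcases le_or_gt 0 (v i) with hvi | hvi
        · rw [abs_of_nonneg hvi]; nlinarith
        · rw [abs_of_neg hvi]; nlinarith
    _ = (∑ i, |v i|) / 2 := by
        rw [← Finset.sum_div, Finset.sum_add_distrib, hsum0, add_zero]

/-- Converse to the substate theorem. -/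
theorem substate_converse {n : ℕ} (ρ σ : Matrix (Fin n) (Fin n) ℂ)
    (hρ : IsState ρ) (hσ : IsState σ) (k : ℝ) (hk : 0 ≤ k)
    (h : ∀ r : ℝ, 1 ≤ r → ∃ ρ' : Matrix (Fin n) (Fin n) ℂ, IsState ρ' ∧
      traceNorm (ρ - ρ') ≤ 2 / r ∧
      (σ - (((r - 1) / (r * (2 : ℝ) ^ (r * k)) : ℝ) : ℂ) • ρ').PosSemidef) :
    ∀ F : Matrix (Fin n) (Fin n) ℂ, IsPOVMElem F → trR F σ ≠ 0 →
      trR F ρ * Real.logb 2 (trR F ρ / trR F σ) ≤ 2 * k + 2 := by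
  intro F hF hq0
  have hp0 : 0 ≤ trR F ρ := trace_mul_re_nonneg hF.1 hρ.1
  have hq0' : 0 ≤ trR F σ := trace_mul_re_nonneg hF.1 hσ.1
  have hqpos : 0 < trR F σ := lt_of_le_of_ne hq0' (Ne.symm hq0)
  have hp1 : trR F ρ ≤ 1 := by
    have h1 : 0 ≤ trR ((1 : Matrix (Fin n) (Fin n) ℂ) - F) ρ :=
      trace_mul_re_nonneg hF.2 hρ.1
    have h2 : trR ((1 : Matrix (Fin n) (Fin n) ℂ) - F) ρ = 1 - trR F ρ := by
      unfold trR
      rw [Matrix.sub_mul, Matrix.one_mul, Matrix.trace_sub]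
      simp [hρ.2]
    linarith
  by_cases hp : trR F ρ = 0
  · rw [hp, zero_mul]; linarith
  have hppos : 0 < trR F ρ := lt_of_le_of_ne hp0 (Ne.symm hp)
  set p := trR F ρ with hpdef
  set q := trR F σ with hqdef
  set r : ℝ := 2 / p with hrdef
  have hr2 : 2 ≤ r := by
    rw [hrdef, le_div_iff₀ hppos]; linarith
  have hr1 : 1 ≤ r := by linarith
  obtain ⟨ρ', hρ', htn, hpsd⟩ := h r hr1
  set T : ℝ := (2 : ℝ) ^ (r * k) with hT
  have hTpos : 0 < T := Real.rpow_pos_of_pos (by norm_num) _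
  set c : ℝ := (r - 1) / (r * T) with hc
  have hcpos : 0 < c := by
    apply div_pos (by linarith) (by positivity)
  -- lower bound on trR F ρ'
  have hA : (ρ - ρ').IsHermitian := hρ.1.1.sub hρ'.1.1
  have htr0 : (ρ - ρ').trace = 0 := by
    rw [Matrix.trace_sub, hρ.2, hρ'.2, sub_self]
  have hkey : trR F (ρ - ρ') ≤ traceNorm (ρ - ρ') / 2 :=
    trR_le_half_traceNorm F _ hF hA htr0
  have h2r : 2 / r = p := by
    rw [hrdef]; field_simp
  have hsub : trR F (ρ - ρ') = p - trR F ρ' := by rw [trR_sub]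
  have hp'half : p / 2 ≤ trR F ρ' := by
    rw [hsub] at hkey
    have : traceNorm (ρ - ρ') / 2 ≤ p / 2 := by
      rw [h2r] at htn; linarith
    linarith
  -- q ≥ c * trR F ρ'
  have hqc : c * trR F ρ' ≤ q := by
    have h0 : 0 ≤ trR F (σ - (c : ℂ) • ρ') := trace_mul_re_nonneg hF.1 hpsd
    rw [trR_sub, trR_smul] at h0
    linarith
  -- lower bound q ≥ p / (4T)
  have hclb : 1 / (2 * T) ≤ c := by
    rw [hc, div_le_div_iff₀ (by positivity) (by positivity)]
    nlinarith
  have hqlb : p / (4 * T) ≤ q :=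
    calc p / (4 * T) = (1 / (2 * T)) * (p / 2) := by ring
      _ ≤ c * trR F ρ' := by
          apply mul_le_mul hclb hp'half (by positivity) (le_of_lt hcpos)
      _ ≤ q := hqc
  have hratio : p / q ≤ 4 * T := by
    rw [div_le_iff₀ (by positivity : (0:ℝ) < 4 * T)] at hqlb
    rw [div_le_iff₀ hqpos]
    nlinarith
  have hlog : Real.logb 2 (p / q) ≤ 2 + r * k := by
    have h1 : Real.logb 2 (p / q) ≤ Real.logb 2 (4 * T) :=
      Real.logb_le_logb_of_le (by norm_num) (div_pos hppos hqpos) hratio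
    have h4 : Real.logb 2 (4 : ℝ) = 2 := by
      rw [show (4 : ℝ) = (2 : ℝ) ^ (2 : ℝ) by norm_num,
        Real.logb_rpow (by norm_num) (by norm_num)]
    have h2 : Real.logb 2 (4 * T) = 2 + r * k := by
      rw [Real.logb_mul (by norm_num) (ne_of_gt hTpos), h4, hT,
        Real.logb_rpow (by norm_num) (by norm_num)]
    linarith
  have h5 : p * Real.logb 2 (p / q) ≤ p * (2 + r * k) :=
    mul_le_mul_of_nonneg_left hlog hp0
  have h6 : p * (2 + r * k) = 2 * p + 2 * k := by
    rw [hrdef]; field_simp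
  rw [h6] at h5
  linarith


end
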